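/- Over an algebraically closed field K of characteristic zero, there exist 3×3 matrices a, b, c with a+b+c = 0, a²+b²+c² = 0, a³+b³+c³ = 0 such that ab ≠ ba. Specifically, take a = J₃ (the 3×3 nilpotent Jordan block), b the strictly upper triangular matrix with b₁₂ = x, b₁₃ = y, b₂₃ = (-2-x)/(2x+1) for any x with 2x+1 ≠ 0 and x²+x+1 ≠ 0, and c = -a - b. -/
import Mathlib

theorem stmt5 {K : Type*} [Field K] [IsAlgClosed K] [CharZero K]
    (x y : K) (hx1 : 2 * x + 1 ≠ 0) (hx2 : x ^ 2 + x + 1 ≠ 0)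
    (a b c : Matrix (Fin 3) (Fin 3) K)
    (ha : a = !![0, 1, 0; 0, 0, 1; 0, 0, 0])
    (hb : b = !![0, x, y; 0, 0, (-2 - x) / (2 * x + 1); 0, 0, 0])
    (hc : c = -a - b) :
    a + b + c = 0 ∧ a ^ 2 + b ^ 2 + c ^ 2 = 0 ∧ a ^ 3 + b ^ 3 + c ^ 3 = 0 ∧
      a * b ≠ b * a := by
  set e : K := (-2 - x) / (2 * x + 1) with he
  have key : e * (2 * x + 1) = -2 - x := div_mul_cancel₀ _ hx1
  clear_value e
  have hc' : c = !![0, -1 - x, -y; 0, 0, -1 - e; 0, 0, 0] := by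
    rw [hc, ha, hb]
    ext i j
    fin_cases i <;> fin_cases j <;>
      simp [Matrix.vecHead, Matrix.vecTail] <;> ring
  subst ha hb hc
  refine ⟨by abel, ?_, ?_, ?_⟩
  · rw [hc']
    simp only [pow_succ, pow_zero, one_mul, Matrix.mul_fin_three]
    ext i j
    fin_cases i <;> fin_cases j <;>
      simp [Matrix.vecHead, Matrix.vecTail] <;> linear_combination key
  · rw [hc']
    simp only [pow_succ, pow_zero, one_mul, Matrix.mul_fin_three]
    ext i j
    fin_cases i <;> fin_cases j <;>
      simp [Matrix.vecHead, Matrix.vecTail] <;> linear_combination (1 - e) * key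
  · intro h
    rw [Matrix.mul_fin_three, Matrix.mul_fin_three] at h
    have h02 : e = x := by
      have := congrFun (congrFun h 0) 2
      simpa using this
    apply hx2
    rw [h02] at key
    linear_combination key / 2
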